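/- Let Σ be an alphabet containing distinct letters a and b. The language L = { w ∈ Σ* : w contains at least one occurrence of a and at least one occurrence of b } is not an erasing pattern language, i.e., there is no pattern α ∈ (Σ ∪ Ξ)* with L(α) = L. -/

import Mathlib

/-- Application of a pattern substitution `σ : Ξ → Σ*` to a pattern over `Σ ∪ Ξ`. -/
def patApply {A X : Type*} (σ : X → List A) (α : List (A ⊕ X)) : List A :=
  α.flatMap (Sum.elim (fun c => [c]) σ)

/-- The erasing pattern language of a pattern. -/
def patLang {A X : Type*} (α : List (A ⊕ X)) : Set (List A) :=
  {w | ∃ σ : X → List A, patApply σ α = w}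

lemma patApply_nil_sublist {A X : Type*} (σ : X → List A) (α : List (A ⊕ X)) :
    (patApply (fun _ => ([] : List A)) α).Sublist (patApply σ α) := by
  induction α with
  | nil => simp [patApply]
  | cons h t ih =>
    cases h with
    | inl c => simpa [patApply] using ih
    | inr x =>
      simp only [patApply, List.flatMap_cons] at *
      exact ih.trans (List.sublist_append_right _ _)

lemma sub_pair {A : Type*} {t : List A} {a b : A} (h : t.Sublist [a, b]) :
    t = [] ∨ t = [a] ∨ t = [b] ∨ t = [a, b] := by
  rcases List.sublist_cons_iff.mp h with h' | ⟨r, rfl, hr⟩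
  · rcases List.sublist_singleton.mp h' with rfl | rfl
    · exact Or.inl rfl
    · exact Or.inr (Or.inr (Or.inl rfl))
  · rcases List.sublist_singleton.mp hr with rfl | rfl
    · exact Or.inr (Or.inl rfl)
    · exact Or.inr (Or.inr (Or.inr rfl))

/-- The language of words containing at least one `a` and at least one `b`
(for distinct letters `a ≠ b`) is not an erasing pattern language. -/
theorem contains_a_and_b_not_patLang {A X : Type*} (a b : A) (hab : a ≠ b) :
    ¬ ∃ α : List (A ⊕ X), patLang α = {w : List A | a ∈ w ∧ b ∈ w} := by
  rintro ⟨α, hα⟩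
  obtain ⟨t, ht⟩ : ∃ t, t = patApply (fun _ => ([] : List A)) α := ⟨_, rfl⟩
  have htL : t ∈ patLang α := ⟨_, ht.symm⟩
  have htab : a ∈ t ∧ b ∈ t := by rwa [hα] at htL
  have hab1 : ([a, b] : List A) ∈ patLang α := by
    rw [hα]; exact ⟨by simp, by simp⟩
  have hab2 : ([b, a] : List A) ∈ patLang α := by
    rw [hα]; exact ⟨by simp, by simp⟩
  obtain ⟨σ1, hσ1⟩ := hab1
  obtain ⟨σ2, hσ2⟩ := hab2
  have hs1 : t.Sublist [a, b] := ht ▸ hσ1 ▸ patApply_nil_sublist σ1 α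
  have hs2 : t.Sublist [b, a] := ht ▸ hσ2 ▸ patApply_nil_sublist σ2 α
  have h1 : t = [a, b] := by
    rcases sub_pair hs1 with rfl | rfl | rfl | rfl
    · simp at htab
    · simp only [List.mem_singleton] at htab; exact absurd htab.2.symm hab
    · simp only [List.mem_singleton] at htab; exact absurd htab.1 hab
    · rfl
  have h2 : t = [b, a] := by
    rcases sub_pair hs2 with rfl | rfl | rfl | rfl
    · simp at htab
    · simp only [List.mem_singleton] at htab; exact absurd htab.1 hab
    · simp only [List.mem_singleton] at htab; exact absurd htab.2.symm hab
    · rfl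
  rw [h1] at h2
  injection h2 with h _
  exact hab h
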